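/- Denoiser closure under linear and negative quadratic tilts: Let p be a probability density on ℝᵈ with denoiser F[u,σ] = (∫ x p(x) e^{(√(1−σ²)/σ²)⟨u,x⟩ − ((1−σ²)/(2σ²))‖x‖²} dx)/(∫ p(x) e^{(√(1−σ²)/σ²)⟨u,x⟩ − ((1−σ²)/(2σ²))‖x‖²} dx). For s ≥ 0 and v ∈ ℝᵈ, define p*(x) ∝ p(x)·e^{⟨v,x⟩ − (s/2)‖x‖²} (assuming the normalizer is finite and positive) with denoiser G[u,σ] defined analogously. Then for all σ ∈ (0,1), G[u,σ] = F[u',σ'] where σ' = √(σ²/(1+sσ²)) and u' = σ²/√((1−σ²+sσ²)(1+sσ²)) · v + √((1−σ²)/((1−σ²+sσ²)(1+sσ²))) · u. -/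

import Mathlib

open MeasureTheory Real
open scoped RealInnerProductSpace

/-- The exponent of the reverse-conditional tilt at noise level `σ`. -/
noncomputable def tiltExp {d : ℕ} (σ : ℝ) (u x : EuclideanSpace ℝ (Fin d)) : ℝ :=
  Real.sqrt (1 - σ ^ 2) / σ ^ 2 * ⟪u, x⟫ - (1 - σ ^ 2) / (2 * σ ^ 2) * ‖x‖ ^ 2

/-- The denoiser (posterior mean) of a density `p` at location `u`, noise level `σ`. -/
noncomputable def denoiser {d : ℕ} (p : EuclideanSpace ℝ (Fin d) → ℝ)
    (u : EuclideanSpace ℝ (Fin d)) (σ : ℝ) : EuclideanSpace ℝ (Fin d) :=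
  (∫ x, p x * Real.exp (tiltExp σ u x))⁻¹ • ∫ x, (p x * Real.exp (tiltExp σ u x)) • x

/-- Denoiser closure under linear and negative quadratic tilts: the denoiser of
`p*(x) ∝ p(x)e^{⟨v,x⟩ − (s/2)‖x‖²}` at `(u,σ)` equals the denoiser of `p` at the
shifted location `u'` and shifted noise level `σ' = √(σ²/(1+sσ²))`. -/
theorem denoiser_closure {d : ℕ} (p : EuclideanSpace ℝ (Fin d) → ℝ)
    (v : EuclideanSpace ℝ (Fin d)) (s : ℝ) (hs : 0 ≤ s)
    (hZ : 0 < ∫ x, p x * Real.exp (⟪v, x⟫ - s / 2 * ‖x‖ ^ 2))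
    (pstar : EuclideanSpace ℝ (Fin d) → ℝ)
    (hpstar : ∀ x, pstar x = p x * Real.exp (⟪v, x⟫ - s / 2 * ‖x‖ ^ 2) /
      (∫ y, p y * Real.exp (⟪v, y⟫ - s / 2 * ‖y‖ ^ 2)))
    (hFint : ∀ (u : EuclideanSpace ℝ (Fin d)) (σ : ℝ),
      Integrable (fun x => p x * Real.exp (tiltExp σ u x)) ∧
      Integrable (fun x => (p x * Real.exp (tiltExp σ u x)) • x))
    (hGint : ∀ (u : EuclideanSpace ℝ (Fin d)) (σ : ℝ),
      Integrable (fun x => pstar x * Real.exp (tiltExp σ u x)) ∧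
      Integrable (fun x => (pstar x * Real.exp (tiltExp σ u x)) • x))
    (σ : ℝ) (hσ : σ ∈ Set.Ioo (0 : ℝ) 1) (u : EuclideanSpace ℝ (Fin d)) :
    denoiser pstar u σ =
      denoiser p
        ((σ ^ 2 / Real.sqrt ((1 - σ ^ 2 + s * σ ^ 2) * (1 + s * σ ^ 2))) • v +
          Real.sqrt ((1 - σ ^ 2) / ((1 - σ ^ 2 + s * σ ^ 2) * (1 + s * σ ^ 2))) • u)
        (Real.sqrt (σ ^ 2 / (1 + s * σ ^ 2))) := by
  obtain ⟨hσ0, hσ1⟩ := hσ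
  have hσ2 : (0:ℝ) < σ ^ 2 := by positivity
  have h1σ : (0:ℝ) < 1 - σ ^ 2 := by nlinarith
  have hB : (0:ℝ) < 1 + s * σ ^ 2 := by positivity
  have hA : (0:ℝ) < 1 - σ ^ 2 + s * σ ^ 2 := by nlinarith
  set A : ℝ := 1 - σ ^ 2 + s * σ ^ 2 with hAdef
  set B : ℝ := 1 + s * σ ^ 2 with hBdef
  set Z : ℝ := ∫ y, p y * Real.exp (⟪v, y⟫ - s / 2 * ‖y‖ ^ 2) with hZdef
  have hZne : Z ≠ 0 := ne_of_gt hZ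
  set σ' : ℝ := Real.sqrt (σ ^ 2 / B) with hσ'def
  set u' : EuclideanSpace ℝ (Fin d) :=
    (σ ^ 2 / Real.sqrt (A * B)) • v + Real.sqrt ((1 - σ ^ 2) / (A * B)) • u with hu'def
  have hσ'2 : σ' ^ 2 = σ ^ 2 / B := Real.sq_sqrt (by positivity)
  set sa : ℝ := Real.sqrt A with hsadef
  set sb : ℝ := Real.sqrt B with hsbdef
  have hsa2 : sa ^ 2 = A := Real.sq_sqrt hA.le
  have hsb2 : sb ^ 2 = B := Real.sq_sqrt hB.le
  have hsapos : (0:ℝ) < sa := Real.sqrt_pos.mpr hA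
  have hsbpos : (0:ℝ) < sb := Real.sqrt_pos.mpr hB
  have hsane : sa ≠ 0 := ne_of_gt hsapos
  have hsbne : sb ≠ 0 := ne_of_gt hsbpos
  have hσ2ne : σ ^ 2 ≠ 0 := ne_of_gt hσ2
  have hBne : B ≠ 0 := ne_of_gt hB
  have h1σ' : 1 - σ' ^ 2 = A / B := by
    rw [hσ'2, hAdef, hBdef]; field_simp; ring
  have hsqrt1σ' : Real.sqrt (1 - σ' ^ 2) = sa / sb := by
    rw [h1σ', hsadef, hsbdef, Real.sqrt_div hA.le]
  have hsqrtAB : Real.sqrt (A * B) = sa * sb := Real.sqrt_mul hA.le B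
  have hsqrtfrac : Real.sqrt ((1 - σ ^ 2) / (A * B)) = Real.sqrt (1 - σ ^ 2) / (sa * sb) := by
    rw [Real.sqrt_div h1σ.le, hsqrtAB]
  -- coefficient identities
  have hc1 : sa / sb / (σ ^ 2 / B) * (σ ^ 2 / (sa * sb)) = 1 := by
    rw [← hsb2]
    field_simp
  have hc2 : sa / sb / (σ ^ 2 / B) * (Real.sqrt (1 - σ ^ 2) / (sa * sb))
      = Real.sqrt (1 - σ ^ 2) / σ ^ 2 := by
    rw [← hsb2]
    field_simp
  have hc3 : (1 - σ ^ 2 / B) / (2 * (σ ^ 2 / B)) = s / 2 + (1 - σ ^ 2) / (2 * σ ^ 2) := by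
    rw [hBdef]
    field_simp
    ring
  have key : ∀ x, pstar x * Real.exp (tiltExp σ u x)
      = Z⁻¹ * (p x * Real.exp (tiltExp σ' u' x)) := by
    intro x
    have hexp : Real.exp (⟪v, x⟫ - s / 2 * ‖x‖ ^ 2) * Real.exp (tiltExp σ u x)
        = Real.exp (tiltExp σ' u' x) := by
      rw [← Real.exp_add]
      congr 1
      simp only [tiltExp, hu'def, inner_add_left, real_inner_smul_left]
      rw [hsqrt1σ', hσ'2, hsqrtAB, hsqrtfrac, mul_add, ← mul_assoc, ← mul_assoc,
        hc1, hc2, hc3]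
      ring
    rw [hpstar x, ← hexp]
    ring
  show (∫ x, pstar x * Real.exp (tiltExp σ u x))⁻¹ •
      ∫ x, (pstar x * Real.exp (tiltExp σ u x)) • x = _
  simp_rw [key]
  have h1 : ∫ x, Z⁻¹ * (p x * Real.exp (tiltExp σ' u' x))
      = Z⁻¹ * ∫ x, p x * Real.exp (tiltExp σ' u' x) := integral_const_mul _ _
  have h2 : ∫ x, (Z⁻¹ * (p x * Real.exp (tiltExp σ' u' x))) • x
      = Z⁻¹ • ∫ x, (p x * Real.exp (tiltExp σ' u' x)) • x := by
    simp_rw [mul_smul]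
    exact integral_smul _ _
  rw [h1, h2, denoiser, mul_inv, smul_smul, inv_inv]
  congr 1
  field_simp
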